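/- Let Φ be an irreducible reduced crystallographic simply-laced root system with base Δ and highest root θ, and let α ∈ Δ be a Heisenberg root. Then: (i) Ψ_α = Φ_α ∪ {θ − α}; in particular θ − α is a root with c_α(θ−α) = 1 and ⟨θ−α, α⟩ = −1; and (ii) for every ε ∈ Ψ_α, the vector ε − α is not a root. -/
import Mathlib


open scoped InnerProductSpace

namespace PaperRS

variable {E : Type*} [NormedAddCommGroup E] [InnerProductSpace ℝ E]

/-- A reduced crystallographic simply-laced root system, normalized so that every root has
squared length `2` (hence `⟪δ, ε⟫` is the Cartan integer `⟨δ, ε^∨⟩`). -/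
structure IsRootSystem (Φ : Set E) : Prop where
  finite : Φ.Finite
  nonzero : (0 : E) ∉ Φ
  span_top : Submodule.span ℝ Φ = ⊤
  norm_two : ∀ α ∈ Φ, ⟪α, α⟫_ℝ = 2
  reduced : ∀ α ∈ Φ, ∀ t : ℝ, t • α ∈ Φ → t = 1 ∨ t = -1
  cartan_int : ∀ α ∈ Φ, ∀ β ∈ Φ, ∃ n : ℤ, ⟪α, β⟫_ℝ = (n : ℝ)
  reflect_mem : ∀ α ∈ Φ, ∀ β ∈ Φ, β - ⟪β, α⟫_ℝ • α ∈ Φ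

/-- Irreducibility: `Φ` is nonempty and cannot be split into two mutually orthogonal parts. -/
def IsIrreducible (Φ : Set E) : Prop :=
  Φ.Nonempty ∧ ∀ Φ₁ Φ₂ : Set E, Φ = Φ₁ ∪ Φ₂ →
    (∀ a ∈ Φ₁, ∀ b ∈ Φ₂, ⟪a, b⟫_ℝ = 0) → Φ₁ = ∅ ∨ Φ₂ = ∅

/-- The reflection in (the hyperplane orthogonal to) a root `α` of squared length `2`. -/
def sRefl (α : E) : Function.End E := fun x => x - ⟪x, α⟫_ℝ • α

/-- The group generated by the reflections in the elements of `S`; since every reflection is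
an involution, the submonoid generated by the reflections coincides with the generated group. -/
def genBy (S : Set E) : Submonoid (Function.End E) :=
  Submonoid.closure (sRefl '' S)

/-- The Weyl group of `Φ`: the group generated by the reflections in all the roots. -/
abbrev WeylGroup (Φ : Set E) : Submonoid (Function.End E) := genBy Φ

/-- A base (set of simple roots) of `Φ`, together with the (unique) integer coefficients
`coeff δ γ` of each root `δ` with respect to the simple roots. -/
structure Base (Φ : Set E) where
  Δ : Finset E
  coeff : E → E → ℤ
  subset : ↑Δ ⊆ Φ
  indep : LinearIndependent ℝ (fun γ : {x : E // x ∈ Δ} => (γ : E))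
  expand : ∀ δ ∈ Φ, δ = ∑ γ ∈ Δ, (coeff δ γ : ℝ) • γ
  sign : ∀ δ ∈ Φ, (∀ γ ∈ Δ, 0 ≤ coeff δ γ) ∨ (∀ γ ∈ Δ, coeff δ γ ≤ 0)

variable {Φ : Set E}

/-- `θ` is the highest root of `Φ` with respect to the base `B`. -/
def IsHighest (B : Base Φ) (θ : E) : Prop :=
  θ ∈ Φ ∧ ∀ δ ∈ Φ, ∀ γ ∈ B.Δ, B.coeff δ γ ≤ B.coeff θ γ

/-- `α` is a Heisenberg simple root: the highest root `θ` has `α`-coefficient `2`, and every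
root other than `±θ` has `α`-coefficient in `{-1, 0, 1}`. -/
def IsHeisenberg (B : Base Φ) (θ α : E) : Prop :=
  B.coeff θ α = 2 ∧
    ∀ δ ∈ Φ, δ ≠ θ → δ ≠ -θ →
      B.coeff δ α = -1 ∨ B.coeff δ α = 0 ∨ B.coeff δ α = 1

/-- `α` is an extreme simple root with (unique) neighbour `β`. -/
def IsExtreme (B : Base Φ) (α β : E) : Prop :=
  β ∈ B.Δ ∧ β ≠ α ∧ ⟪α, β⟫_ℝ ≠ 0 ∧
    ∀ γ ∈ B.Δ, γ ≠ α → ⟪α, γ⟫_ℝ ≠ 0 → γ = β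

/-- `Φ_α`: the roots with `α`-coefficient `1` that are orthogonal to `α`. -/
def PhiSet (B : Base Φ) (α : E) : Set E :=
  {ε ∈ Φ | B.coeff ε α = 1 ∧ ⟪ε, α⟫_ℝ = 0}

/-- `Ψ_α`: the roots `ε` with `α`-coefficient `1` and `⟪ε, α⟫ ≤ 0`. -/
def PsiSet (B : Base Φ) (α : E) : Set E :=
  {ε ∈ Φ | B.coeff ε α = 1 ∧ ⟪ε, α⟫_ℝ ≤ 0}

/-- Uniqueness of coefficients in an expansion over the base. -/
lemma Base.coeff_unique (B : Base Φ) {r s : E → ℝ}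
    (h : ∑ γ ∈ B.Δ, r γ • γ = ∑ γ ∈ B.Δ, s γ • γ) : ∀ γ ∈ B.Δ, r γ = s γ := by
  have h0 : ∑ γ : {x : E // x ∈ B.Δ}, (r γ.1 - s γ.1) • (γ.1 : E) = 0 := by
    rw [Finset.univ_eq_attach]
    rw [Finset.sum_attach B.Δ (fun x => (r x - s x) • x)]
    have : ∑ γ ∈ B.Δ, (r γ - s γ) • γ
        = ∑ γ ∈ B.Δ, r γ • γ - ∑ γ ∈ B.Δ, s γ • γ := by
      rw [← Finset.sum_sub_distrib]
      exact Finset.sum_congr rfl fun x _ => sub_smul _ _ _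
    rw [this, h, sub_self]
  intro γ hγ
  have h1 := linearIndependent_iff'.mp B.indep Finset.univ
    (fun γ => r γ.1 - s γ.1) h0 ⟨γ, hγ⟩ (Finset.mem_univ _)
  have h2 : r γ - s γ = 0 := by simpa using h1
  linarith

/-- If a root is written as a real combination of the simple roots, the coefficients are the
`coeff`s. -/
lemma Base.coeff_eq (B : Base Φ) {δ : E} (hδ : δ ∈ Φ) {r : E → ℝ}
    (h : δ = ∑ γ ∈ B.Δ, r γ • γ) : ∀ γ ∈ B.Δ, (B.coeff δ γ : ℝ) = r γ :=
  B.coeff_unique ((B.expand δ hδ).symm.trans h)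

open scoped Classical in
lemma Base.coeff_simple (B : Base Φ) {γ β : E} (hγ : γ ∈ B.Δ) (hβ : β ∈ B.Δ) :
    B.coeff γ β = if β = γ then 1 else 0 := by
  have h : γ = ∑ x ∈ B.Δ, (if x = γ then (1 : ℝ) else 0) • x := by
    rw [show (fun x => (if x = γ then (1 : ℝ) else 0) • x)
        = fun x => if x = γ then (1 : ℝ) • x else 0 from funext fun x => by
          by_cases hx : x = γ <;> simp [hx]]
    rw [Finset.sum_ite_eq' B.Δ γ (fun x => (1 : ℝ) • x)]
    simp [hγ]
  have := B.coeff_eq (B.subset hγ) h β hβ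
  by_cases hc : β = γ <;> simp [hc] at this ⊢ <;> exact_mod_cast this

lemma Base.coeff_neg (B : Base Φ) {δ : E} (hδ : δ ∈ Φ) (hnδ : -δ ∈ Φ) {γ : E}
    (hγ : γ ∈ B.Δ) : B.coeff (-δ) γ = -B.coeff δ γ := by
  have h : -δ = ∑ x ∈ B.Δ, (-(B.coeff δ x : ℝ)) • x := by
    rw [show ∀ x : E → ℝ, (∑ g ∈ B.Δ, (-(x g)) • g) = -∑ g ∈ B.Δ, x g • g from
      fun x => by simp [neg_smul, Finset.sum_neg_distrib], ← B.expand δ hδ]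
  have := B.coeff_eq hnδ h γ hγ
  exact_mod_cast this

open scoped Classical in
/-- Coefficients of `δ - n • β` for a simple root `β`. -/
lemma Base.coeff_sub_smul (B : Base Φ) {δ : E} (hδ : δ ∈ Φ) {β : E} (hβ : β ∈ B.Δ) {n : ℤ}
    (hmem : δ - (n : ℝ) • β ∈ Φ) {γ : E} (hγ : γ ∈ B.Δ) :
    B.coeff (δ - (n : ℝ) • β) γ = B.coeff δ γ - (if γ = β then n else 0) := by
  have h : δ - (n : ℝ) • β
      = ∑ x ∈ B.Δ, ((B.coeff δ x : ℝ) - (if x = β then (n : ℝ) else 0)) • x := by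
    have e1 : ∑ x ∈ B.Δ, ((B.coeff δ x : ℝ) - (if x = β then (n : ℝ) else 0)) • x
        = ∑ x ∈ B.Δ, (B.coeff δ x : ℝ) • x
          - ∑ x ∈ B.Δ, (if x = β then (n : ℝ) else 0) • x := by
      rw [← Finset.sum_sub_distrib]
      exact Finset.sum_congr rfl fun x _ => sub_smul _ _ _
    have e2 : ∑ x ∈ B.Δ, (if x = β then (n : ℝ) else 0) • x = (n : ℝ) • β := by
      rw [show (fun x => (if x = β then (n : ℝ) else 0) • x)
          = fun x => if x = β then (n : ℝ) • x else 0 from funext fun x => by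
            by_cases hx : x = β <;> simp [hx]]
      rw [Finset.sum_ite_eq' B.Δ β (fun x => (n : ℝ) • x)]
      simp [hβ]
    rw [e1, e2, ← B.expand δ hδ]
  have := B.coeff_eq hmem h γ hγ
  by_cases hc : γ = β <;> simp [hc] at this ⊢ <;> exact_mod_cast this

lemma IsRootSystem.neg_mem (hΦ : IsRootSystem Φ) {δ : E} (hδ : δ ∈ Φ) : -δ ∈ Φ := by
  have h := hΦ.reflect_mem δ hδ δ hδ
  rwa [hΦ.norm_two δ hδ, show δ - (2 : ℝ) • δ = -δ by module] at h

/-- For distinct roots the inner product is `< 2`. -/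
lemma IsRootSystem.inner_lt_two (hΦ : IsRootSystem Φ) {δ ε : E} (hδ : δ ∈ Φ) (hε : ε ∈ Φ)
    (hne : δ ≠ ε) : ⟪δ, ε⟫_ℝ < 2 := by
  have h1 : (0 : ℝ) < ⟪δ - ε, δ - ε⟫_ℝ := lt_of_not_ge fun hle => sub_ne_zero.mpr hne (real_inner_self_nonpos.mp hle)
  have h2 : ⟪δ - ε, δ - ε⟫_ℝ = 4 - 2 * ⟪δ, ε⟫_ℝ := by
    rw [inner_sub_left, inner_sub_right, inner_sub_right, hΦ.norm_two δ hδ, hΦ.norm_two ε hε,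
      real_inner_comm ε δ]
    ring
  linarith

/-- For a Heisenberg simple root `α`: (i) `Ψ_α = Φ_α ∪ {θ - α}`, and `θ - α` is a root with
`α`-coefficient `1` and `⟪θ - α, α⟫ = -1`; (ii) for every `ε ∈ Ψ_α`, `ε - α` is not a root. -/
theorem psiSet_eq_phiSet_union_singleton
    (hΦ : IsRootSystem Φ) (hirr : IsIrreducible Φ) (B : Base Φ)
    {θ α : E} (hθ : IsHighest B θ) (hα : α ∈ B.Δ) (hH : IsHeisenberg B θ α) :
    PsiSet B α = PhiSet B α ∪ {θ - α} ∧
      (θ - α ∈ Φ ∧ B.coeff (θ - α) α = 1 ∧ ⟪θ - α, α⟫_ℝ = -1) ∧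
      ∀ ε ∈ PsiSet B α, ε - α ∉ Φ := by
  classical
  have hθΦ := hθ.1
  have hαΦ : α ∈ Φ := B.subset hα
  have hθ2 : B.coeff θ α = 2 := hH.1
  -- θ has nonnegative coefficients
  have hθnn : ∀ γ ∈ B.Δ, 0 ≤ B.coeff θ γ := by
    rcases B.sign θ hθΦ with h | h
    · exact h
    · have := h α hα; omega
  have hnegθ : -θ ∈ Φ := hΦ.neg_mem hθΦ
  have hcnegθ : B.coeff (-θ) α = -2 := by
    rw [B.coeff_neg hθΦ hnegθ hα, hθ2]
  -- ⟪θ, α⟫ = 1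
  obtain ⟨n, hn⟩ := hΦ.cartan_int θ hθΦ α hαΦ
  have hθne : θ ≠ α := by
    intro h
    rw [h] at hθ2
    have := B.coeff_simple hα hα
    rw [if_pos rfl] at this
    omega
  have hn2 : n < 2 := by
    have := hΦ.inner_lt_two hθΦ hαΦ hθne
    rw [hn] at this; exact_mod_cast this
  have hn1 : n = 1 := by
    by_contra hne1
    have hn0 : n ≤ 0 := by omega
    rcases eq_or_lt_of_le hn0 with hn0 | hnneg
    · -- n = 0 : descend from θ by some other simple root, contradiction with Heisenberg
      have hsum : ∑ γ ∈ B.Δ, (B.coeff θ γ : ℝ) * ⟪θ, γ⟫_ℝ = 2 := by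
        rw [show ∑ γ ∈ B.Δ, (B.coeff θ γ : ℝ) * ⟪θ, γ⟫_ℝ
            = ⟪θ, ∑ γ ∈ B.Δ, (B.coeff θ γ : ℝ) • γ⟫_ℝ by
          rw [inner_sum]
          exact Finset.sum_congr rfl fun γ _ => (real_inner_smul_right _ _ _).symm]
        rw [← B.expand θ hθΦ, hΦ.norm_two θ hθΦ]
      have hex : ∃ γ ∈ B.Δ, 0 < (B.coeff θ γ : ℝ) * ⟪θ, γ⟫_ℝ := by
        by_contra hno
        push_neg at hno
        have := Finset.sum_nonpos hno
        rw [hsum] at this; linarith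
      obtain ⟨γ, hγ, hpos⟩ := hex
      have hγα : γ ≠ α := by
        intro h; rw [h, hn, hn0] at hpos; norm_num at hpos
      have hγΦ : γ ∈ Φ := B.subset hγ
      have hipos : 0 < ⟪θ, γ⟫_ℝ := by
        by_contra hip
        push_neg at hip
        have h0 : (0 : ℝ) ≤ (B.coeff θ γ : ℝ) := by exact_mod_cast hθnn γ hγ
        nlinarith
      obtain ⟨m, hm⟩ := hΦ.cartan_int θ hθΦ γ hγΦ
      have hθγ : θ ≠ γ := by
        intro h
        rw [h] at hθ2
        rw [B.coeff_simple hγ hα, if_neg (Ne.symm hγα)] at hθ2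
        omega
      have hm2 : m < 2 := by
        have := hΦ.inner_lt_two hθΦ hγΦ hθγ
        rw [hm] at this; exact_mod_cast this
      have hm1 : m = 1 := by
        have : (0 : ℝ) < (m : ℝ) := hm ▸ hipos
        have : 0 < m := by exact_mod_cast this
        omega
      have hδΦ : θ - ((1 : ℤ) : ℝ) • γ ∈ Φ := by
        have h := hΦ.reflect_mem γ hγΦ θ hθΦ
        rw [Int.cast_one]
        rw [hm, hm1] at h
        exact_mod_cast h
      have hδc : B.coeff (θ - ((1 : ℤ) : ℝ) • γ) α = 2 := by
        rw [B.coeff_sub_smul hθΦ hγ hδΦ hα, if_neg hγα.symm, hθ2]; ring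
      have hδθ : θ - ((1 : ℤ) : ℝ) • γ ≠ θ := by
        intro h
        have : ((1 : ℤ) : ℝ) • γ = 0 := by
          have := sub_eq_self.mp h; exact this
        simp at this
        exact hΦ.nonzero (this ▸ hγΦ)
      have hδnθ : θ - ((1 : ℤ) : ℝ) • γ ≠ -θ := by
        intro h; rw [h, hcnegθ] at hδc; omega
      rcases hH.2 _ hδΦ hδθ hδnθ with h | h | h <;> omega
    · -- n < 0 : reflection has α-coefficient > 2, contradicting highestness
      have hδΦ : θ - (n : ℝ) • α ∈ Φ := by
        have h := hΦ.reflect_mem α hαΦ θ hθΦ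
        rwa [hn] at h
      have hδc : B.coeff (θ - (n : ℝ) • α) α = 2 - n := by
        rw [B.coeff_sub_smul hθΦ hα hδΦ hα, if_pos rfl, hθ2]
      have := hθ.2 _ hδΦ α hα
      omega
  have hnR : ⟪θ, α⟫_ℝ = 1 := by rw [hn, hn1]; norm_num
  -- θ - α is a root
  have hθαΦ : θ - α ∈ Φ := by
    have h := hΦ.reflect_mem α hαΦ θ hθΦ
    rwa [hnR, one_smul] at h
  have hθαc : B.coeff (θ - α) α = 1 := by
    have hmem : θ - ((1 : ℤ) : ℝ) • α ∈ Φ := by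
      rw [Int.cast_one, one_smul]; exact hθαΦ
    have h := B.coeff_sub_smul hθΦ hα hmem hα
    rw [if_pos rfl, hθ2] at h
    rw [Int.cast_one, one_smul] at h
    omega
  have hθαi : ⟪θ - α, α⟫_ℝ = -1 := by
    rw [inner_sub_left, hnR, hΦ.norm_two α hαΦ]; norm_num
  have hcαα : B.coeff α α = 1 := by
    have := B.coeff_simple hα hα; simpa using this
  have hcnegα : B.coeff (-α) α = -1 := by
    rw [B.coeff_neg hαΦ (hΦ.neg_mem hαΦ) hα, hcαα]
  refine ⟨?_, ⟨hθαΦ, hθαc, hθαi⟩, ?_⟩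
  · -- Ψ_α = Φ_α ∪ {θ - α}
    ext ε
    simp only [PsiSet, PhiSet, Set.mem_setOf_eq, Set.mem_union, Set.mem_singleton_iff]
    constructor
    · rintro ⟨hεΦ, hc1, hle⟩
      obtain ⟨m, hm⟩ := hΦ.cartan_int ε hεΦ α hαΦ
      have hm0 : m ≤ 0 := by
        have : (m : ℝ) ≤ 0 := hm ▸ hle
        exact_mod_cast this
      by_cases hmz : m = 0
      · exact Or.inl ⟨hεΦ, hc1, by rw [hm, hmz]; norm_num⟩
      · have hεnα : ε ≠ -α := by
          intro h; rw [h, hcnegα] at hc1; omega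
        have hmgt : -2 < m := by
          have h := hΦ.inner_lt_two hεΦ (hΦ.neg_mem hαΦ) hεnα
          rw [inner_neg_right, hm] at h
          have : (-2 : ℝ) < (m : ℝ) := by linarith
          exact_mod_cast this
        have hm1 : m = -1 := by omega
        have hζΦ : ε - ((-1 : ℤ) : ℝ) • α ∈ Φ := by
          have h := hΦ.reflect_mem α hαΦ ε hεΦ
          rw [hm, hm1] at h
          exact_mod_cast h
        have hζc : B.coeff (ε - ((-1 : ℤ) : ℝ) • α) α = 2 := by
          rw [B.coeff_sub_smul hεΦ hα hζΦ hα, if_pos rfl, hc1]; norm_num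
        have hζnθ : ε - ((-1 : ℤ) : ℝ) • α ≠ -θ := by
          intro h; rw [h, hcnegθ] at hζc; omega
        have hζθ : ε - ((-1 : ℤ) : ℝ) • α = θ := by
          by_contra hne
          rcases hH.2 _ hζΦ hne hζnθ with h | h | h <;> omega
        have : ε + α = θ := by
          rw [← hζθ]; push_cast; rw [neg_one_smul]; abel
        exact Or.inr (by rw [← this]; abel)
    · rintro (⟨hεΦ, h1, h2⟩ | h)
      · exact ⟨hεΦ, h1, le_of_eq h2⟩
      · rw [h]; exact ⟨hθαΦ, hθαc, by rw [hθαi]; norm_num⟩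
  · -- ε - α is never a root for ε ∈ Ψ_α
    intro ε hε hmem
    obtain ⟨hεΦ, -, hle⟩ := hε
    have h2 : ⟪ε - α, ε - α⟫_ℝ = 2 := hΦ.norm_two _ hmem
    have h4 : ⟪ε - α, ε - α⟫_ℝ = 4 - 2 * ⟪ε, α⟫_ℝ := by
      rw [inner_sub_left, inner_sub_right, inner_sub_right, hΦ.norm_two ε hεΦ,
        hΦ.norm_two α hαΦ, real_inner_comm α ε]
      ring
    linarith


end PaperRS
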